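/- Let u, v : ℝ → ℝ be functions such that for every real t, u has derivative sin(π · u(t)) at t and v has derivative cos(π · u(t)) at t, and suppose 0 < u(0) < 1. Then v(t) → −∞ as t → +∞ and also v(t) → −∞ as t → −∞. -/

import Mathlib

open Real Filter Set

private lemma stmt5_hasDerivAt_sinpi (x : ℝ) :
    HasDerivAt (fun x : ℝ => Real.sin (π * x)) (Real.cos (π * x) * (π * 1)) x :=
  (((hasDerivAt_id x).const_mul π).sin)

private lemma stmt5_lipschitz : LipschitzWith 4 (fun x : ℝ => Real.sin (π * x)) := by
  apply lipschitzWith_of_nnnorm_deriv_le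
  · exact fun x => (stmt5_hasDerivAt_sinpi x).differentiableAt
  · intro x
    rw [← NNReal.coe_le_coe, coe_nnnorm, (stmt5_hasDerivAt_sinpi x).deriv]
    have h1 : |Real.cos (π * x)| ≤ 1 := Real.abs_cos_le_one _
    have h2 : (0:ℝ) < π := Real.pi_pos
    have h3 : π ≤ 4 := Real.pi_le_four
    rw [Real.norm_eq_abs, mul_one, abs_mul, abs_of_pos h2]
    push_cast
    nlinarith

/-- If `(u, v)` is an integral curve of the model stable vector field,
i.e. `u' t = sin (π · u t)` and `v' t = cos (π · u t)` for all `t`, and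
`0 < u 0 < 1`, then `v t → −∞` as `t → +∞` and also as `t → −∞`. -/
theorem stmt_5 (u v : ℝ → ℝ)
    (hu : ∀ t : ℝ, HasDerivAt u (Real.sin (π * u t)) t)
    (hv : ∀ t : ℝ, HasDerivAt v (Real.cos (π * u t)) t)
    (h0 : 0 < u 0) (h1 : u 0 < 1) :
    Tendsto v atTop atBot ∧ Tendsto v atBot atBot := by
  set F : ℝ → ℝ := fun x => Real.sin (π * x) with hFdef
  have hucont : Continuous u := by
    rw [continuous_iff_continuousAt]; exact fun t => (hu t).continuousAt
  -- uniqueness: if u hits an equilibrium value c, then u 0 = c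
  have key : ∀ c : ℝ, F c = 0 → ∀ t : ℝ, u t = c → u 0 = c := by
    intro c hc t hut
    have heq := ODE_solution_unique_of_mem_Ioo
      (v := fun _ x => F x) (s := fun _ => (univ : Set ℝ)) (K := 4)
      (f := u) (g := fun _ => c)
      (fun _ _ => stmt5_lipschitz.lipschitzOnWith)
      (t₀ := t) (a := min t 0 - 1) (b := max t 0 + 1)
      ⟨by have := min_le_left t 0; linarith, by have := le_max_left t 0; linarith⟩
      (fun t' _ => ⟨hu t', mem_univ _⟩)
      (fun t' _ => ⟨by simpa [hc] using hasDerivAt_const t' c, mem_univ _⟩)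
      hut
    exact heq ⟨by have := min_le_right t 0; linarith, by have := le_max_right t 0; linarith⟩
  have hF0 : F 0 = 0 := by simp [hFdef]
  have hF1 : F 1 = 0 := by simp [hFdef]
  -- u stays in (0, 1)
  have hbound : ∀ t : ℝ, 0 < u t ∧ u t < 1 := by
    intro t
    constructor
    · by_contra h
      push_neg at h
      obtain ⟨s, _, hus⟩ := intermediate_value_uIcc (a := 0) (b := t)
        hucont.continuousOn (mem_uIcc.mpr (Or.inr ⟨h, h0.le⟩))
      exact h0.ne' (key 0 hF0 s hus)
    · by_contra h
      push_neg at h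
      obtain ⟨s, _, hus⟩ := intermediate_value_uIcc (a := 0) (b := t)
        hucont.continuousOn (mem_uIcc.mpr (Or.inl ⟨h1.le, h⟩))
      exact h1.ne (key 1 hF1 s hus)
  -- u is strictly monotone
  have hmono : StrictMono u := by
    apply strictMono_of_deriv_pos
    intro t
    rw [(hu t).deriv]
    exact Real.sin_pos_of_pos_of_lt_pi (mul_pos Real.pi_pos (hbound t).1)
      (mul_lt_of_lt_one_right Real.pi_pos (hbound t).2)
  have hFcont : Continuous F := Real.continuous_sin.comp (continuous_const.mul continuous_id)
  -- u eventually exceeds 2/3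
  have hT1 : ∃ T : ℝ, 2/3 < u T := by
    by_contra h
    push_neg at h
    obtain ⟨x₀, hx₀, hmin⟩ := (isCompact_Icc (a := u 0) (b := (2:ℝ)/3)).exists_isMinOn
      ⟨u 0, le_refl _, h 0⟩ hFcont.continuousOn
    have hδ : 0 < F x₀ := Real.sin_pos_of_pos_of_lt_pi
      (mul_pos Real.pi_pos (lt_of_lt_of_le h0 hx₀.1))
      (mul_lt_of_lt_one_right Real.pi_pos (lt_of_le_of_lt hx₀.2 (by norm_num)))
    have hd : ∀ t : ℝ, HasDerivAt (fun s => u s - F x₀ * s) (F (u t) - F x₀ * 1) t :=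
      fun t => (hu t).sub ((hasDerivAt_id t).const_mul (F x₀))
    have hg : MonotoneOn (fun s => u s - F x₀ * s) (Ici 0) := by
      apply monotoneOn_of_deriv_nonneg (convex_Ici 0)
      · exact (hucont.sub (continuous_const.mul continuous_id)).continuousOn
      · exact fun x _ => (hd x).differentiableAt.differentiableWithinAt
      · intro x hx
        rw [interior_Ici] at hx
        rw [(hd x).deriv, mul_one, sub_nonneg]
        exact isMinOn_iff.mp hmin (u x) ⟨hmono.monotone hx.le, h x⟩
    have ht0 : (0:ℝ) ≤ 1 / F x₀ := by positivity
    have := hg (self_mem_Ici) (mem_Ici.mpr ht0) ht0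
    simp only [mul_zero, sub_zero, mul_one_div, div_self hδ.ne'] at this
    have := (hbound (1 / F x₀)).2
    linarith
  -- u eventually (to the past) is below 1/3
  have hT2 : ∃ T : ℝ, u T < 1/3 := by
    by_contra h
    push_neg at h
    obtain ⟨x₀, hx₀, hmin⟩ := (isCompact_Icc (a := (1:ℝ)/3) (b := u 0)).exists_isMinOn
      ⟨u 0, h 0, le_refl _⟩ hFcont.continuousOn
    have hδ : 0 < F x₀ := Real.sin_pos_of_pos_of_lt_pi
      (mul_pos Real.pi_pos (lt_of_lt_of_le (by norm_num) hx₀.1))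
      (mul_lt_of_lt_one_right Real.pi_pos (lt_of_le_of_lt hx₀.2 h1))
    have hd : ∀ t : ℝ, HasDerivAt (fun s => u s - F x₀ * s) (F (u t) - F x₀ * 1) t :=
      fun t => (hu t).sub ((hasDerivAt_id t).const_mul (F x₀))
    have hg : MonotoneOn (fun s => u s - F x₀ * s) (Iic 0) := by
      apply monotoneOn_of_deriv_nonneg (convex_Iic 0)
      · exact (hucont.sub (continuous_const.mul continuous_id)).continuousOn
      · exact fun x _ => (hd x).differentiableAt.differentiableWithinAt
      · intro x hx
        rw [interior_Iic] at hx
        rw [(hd x).deriv, mul_one, sub_nonneg]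
        exact isMinOn_iff.mp hmin (u x) ⟨h x, hmono.monotone hx.le⟩
    have ht0 : -(1 / F x₀) ≤ (0:ℝ) := neg_nonpos.mpr (by positivity)
    have := hg (mem_Iic.mpr ht0) self_mem_Iic ht0
    simp only [mul_zero, sub_zero, mul_neg, mul_one_div, div_self hδ.ne', sub_neg_eq_add] at this
    have := (hbound (-(1 / F x₀))).1
    linarith
  -- cos (π * 2/3) = -(1/2)
  have hcos23 : Real.cos (π * (2/3)) = -(1/2) := by
    rw [show π * (2/3) = π - π/3 by ring, Real.cos_pi_sub, Real.cos_pi_div_three]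
  have hcos13 : Real.cos (π * (1/3)) = 1/2 := by
    rw [show π * (1/3) = π/3 by ring, Real.cos_pi_div_three]
  constructor
  · -- t → +∞
    obtain ⟨T, hT⟩ := hT1
    have hcos : ∀ t : ℝ, T ≤ t → Real.cos (π * u t) ≤ -(1/2) := by
      intro t ht
      have h23 : 2/3 < u t := lt_of_lt_of_le hT (hmono.monotone ht)
      have := Real.cos_lt_cos_of_nonneg_of_le_pi
        (x := π * (2/3)) (y := π * u t)
        (by positivity)
        (mul_le_of_le_one_right Real.pi_pos.le (hbound t).2.le)
        (by nlinarith [Real.pi_pos])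
      rw [hcos23] at this
      linarith
    have hd : ∀ t : ℝ, HasDerivAt (fun s => v s + s/2) (Real.cos (π * u t) + 1/2) t := by
      intro t
      have := (hv t).add ((hasDerivAt_id t).div_const 2)
      exact this
    have hvcont : Continuous v := by
      rw [continuous_iff_continuousAt]; exact fun t => (hv t).continuousAt
    have hg : AntitoneOn (fun s => v s + s/2) (Ici T) := by
      apply antitoneOn_of_deriv_nonpos (convex_Ici T)
      · exact (hvcont.add (continuous_id.div_const 2)).continuousOn
      · exact fun x _ => (hd x).differentiableAt.differentiableWithinAt
      · intro x hx
        rw [interior_Ici] at hx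
        rw [(hd x).deriv]
        have := hcos x hx.le
        linarith
    have hev : ∀ᶠ t in atTop, v t ≤ (v T + T/2) - t/2 := by
      filter_upwards [eventually_ge_atTop T] with t ht
      have := hg self_mem_Ici (mem_Ici.mpr ht) ht
      linarith
    refine tendsto_atBot_mono' atTop hev ?_
    have h2 : Tendsto (fun t : ℝ => t/2) atTop atTop :=
      tendsto_id.atTop_div_const (by norm_num)
    have h3 : Tendsto (fun t : ℝ => -(t/2)) atTop atBot :=
      tendsto_neg_atTop_atBot.comp h2
    simpa [sub_eq_add_neg] using tendsto_atBot_add_const_left atTop (v T + T/2) h3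
  · -- t → -∞
    obtain ⟨T, hT⟩ := hT2
    have hcos : ∀ t : ℝ, t ≤ T → 1/2 ≤ Real.cos (π * u t) := by
      intro t ht
      have h13 : u t < 1/3 := lt_of_le_of_lt (hmono.monotone ht) hT
      have := Real.cos_lt_cos_of_nonneg_of_le_pi
        (x := π * u t) (y := π * (1/3))
        (mul_nonneg Real.pi_pos.le (hbound t).1.le)
        (mul_le_of_le_one_right Real.pi_pos.le (by norm_num))
        (by nlinarith [Real.pi_pos])
      rw [hcos13] at this
      linarith
    have hd : ∀ t : ℝ, HasDerivAt (fun s => v s - s/2) (Real.cos (π * u t) - 1/2) t := by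
      intro t
      have := (hv t).sub ((hasDerivAt_id t).div_const 2)
      exact this
    have hvcont : Continuous v := by
      rw [continuous_iff_continuousAt]; exact fun t => (hv t).continuousAt
    have hg : MonotoneOn (fun s => v s - s/2) (Iic T) := by
      apply monotoneOn_of_deriv_nonneg (convex_Iic T)
      · exact (hvcont.sub (continuous_id.div_const 2)).continuousOn
      · exact fun x _ => (hd x).differentiableAt.differentiableWithinAt
      · intro x hx
        rw [interior_Iic] at hx
        rw [(hd x).deriv]
        have := hcos x hx.le
        linarith
    have hev : ∀ᶠ t in atBot, v t ≤ (v T - T/2) + t/2 := by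
      filter_upwards [eventually_le_atBot T] with t ht
      have := hg (mem_Iic.mpr ht) self_mem_Iic ht
      linarith
    refine tendsto_atBot_mono' atBot hev ?_
    have h2 : Tendsto (fun t : ℝ => t/2) atBot atBot :=
      tendsto_id.atBot_div_const (by norm_num)
    simpa using tendsto_atBot_add_const_left atBot (v T - T/2) h2
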